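/- Let Δ ≥ 1 be real and suppose 0 < λ < λ_c(Δ+1) = (Δ+1)^{Δ+1}/Δ^{Δ+2}. Then for every positive integer d, ν_λ(d)·Δ < 1, where ν_λ(d) = (d·x̃_λ(d) - 1)/(1 + x̃_λ(d)) and x̃_λ(d) is the unique positive solution of d·x = 1 + λ/(1+x)^d. -/

import Mathlib

theorem nu_times_Delta_lt_one (Δ : ℝ) (hΔ : 1 ≤ Δ) (lam : ℝ) (hlam : 0 < lam)
    (hlt : lam < (Δ + 1) ^ (Δ + 1) / Δ ^ (Δ + 2)) (d : ℕ) (hd : 0 < d)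
    (xt : ℝ) (hxt : 0 < xt) (heq : (d : ℝ) * xt = 1 + lam / (1 + xt) ^ d) :
    (((d : ℝ) * xt - 1) / (1 + xt)) * Δ < 1 := by
  by_contra hcon
  push_neg at hcon
  set y : ℝ := 1 + xt with hy
  have hy1 : 1 < y := by simp [hy]; linarith
  have hy0 : 0 < y := by linarith
  have hyd : (0:ℝ) < y ^ d := pow_pos hy0 d
  have hΔ0 : (0:ℝ) < Δ := by linarith
  -- lam = (d xt - 1) * y^d
  have hlameq : lam = ((d:ℝ) * xt - 1) * y ^ d := by
    field_simp at heq
    linarith [heq]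
  -- from hcon: (d xt - 1) * Δ ≥ y
  have hcon' : y ≤ ((d:ℝ) * xt - 1) * Δ := by
    rw [div_mul_eq_mul_div, le_div_iff₀ hy0, one_mul] at hcon
    linarith
  -- hence lam * Δ ≥ y^(d+1)
  have hlamΔ : y ^ (d+1) ≤ lam * Δ := by
    rw [hlameq, pow_succ]
    nlinarith
  -- xt (dΔ - 1) ≥ Δ + 1
  have hkey : Δ + 1 ≤ xt * ((d:ℝ) * Δ - 1) := by nlinarith
  have hdΔ : (0:ℝ) < (d:ℝ) * Δ - 1 := by nlinarith
  set s : ℝ := ((d:ℝ) * Δ - 1) / (Δ + 1) with hs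
  have hs0 : 0 < s := div_pos hdΔ (by linarith)
  have hds : ((d:ℝ) + 1) = (s + 1) * (Δ + 1) / Δ := by
    rw [hs]; field_simp; ring
  have hxs : 1 / s ≤ xt := by
    rw [hs, one_div_div, div_le_iff₀ hdΔ]
    linarith
  have hys : 1 + 1/s ≤ y := by rw [hy]; linarith
  have hb0 : (0:ℝ) < 1 + 1/s := by positivity
  -- log inequalities
  have hlog1 : 1 / (s + 1) < Real.log (1 + 1/s) := by
    have h1 : Real.log (s / (s + 1)) < s / (s + 1) - 1 := by
      apply Real.log_lt_sub_one_of_pos (by positivity)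
      intro h
      rw [div_eq_one_iff_eq (by positivity)] at h
      linarith
    have h2 : (1 + 1/s) = (s / (s + 1))⁻¹ := by
      field_simp
    rw [h2, Real.log_inv]
    have h3 : s / (s + 1) - 1 = -(1 / (s + 1)) := by
      field_simp
      ring
    rw [h3] at h1
    linarith
  have hlog2 : Real.log (1 + 1/Δ) < 1 / Δ := by
    have h1 : Real.log (1 + 1/Δ) < (1 + 1/Δ) - 1 := by
      apply Real.log_lt_sub_one_of_pos (by positivity)
      intro h
      have : 1/Δ = 0 := by linarith
      simp at this; linarith
    linarith
  -- main log comparison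
  have hmain : (Δ + 1) * Real.log (1 + 1/Δ) < ((d:ℝ) + 1) * Real.log (1 + 1/s) := by
    have h1 : ((d:ℝ) + 1) * (1 / (s + 1)) = (Δ + 1) / Δ := by
      rw [hds]; field_simp
    have h2 : (Δ + 1) * Real.log (1 + 1/Δ) < (Δ + 1) / Δ := by
      have := mul_lt_mul_of_pos_left hlog2 (show (0:ℝ) < Δ + 1 by linarith)
      calc (Δ + 1) * Real.log (1 + 1/Δ) < (Δ + 1) * (1/Δ) := this
        _ = (Δ + 1) / Δ := by ring
    have hd1 : (0:ℝ) < (d:ℝ) + 1 := by positivity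
    have h3 : ((d:ℝ) + 1) * (1/(s+1)) < ((d:ℝ) + 1) * Real.log (1 + 1/s) :=
      mul_lt_mul_of_pos_left hlog1 hd1
    linarith [h1 ▸ h3]
  -- exponentiate: (1+1/Δ)^(Δ+1) < (1+1/s)^(d+1)
  have hΔb0 : (0:ℝ) < 1 + 1/Δ := by positivity
  have hexp : (1 + 1/Δ) ^ (Δ + 1) < (1 + 1/s) ^ (d + 1) := by
    have e1 : (1 + 1/Δ) ^ (Δ + 1) = Real.exp ((Δ + 1) * Real.log (1 + 1/Δ)) := by
      rw [Real.rpow_def_of_pos hΔb0]; ring_nf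
    have e2 : ((1 + 1/s) : ℝ) ^ (d + 1) = Real.exp (((d:ℝ) + 1) * Real.log (1 + 1/s)) := by
      rw [← Real.rpow_natCast (1 + 1/s) (d + 1), Real.rpow_def_of_pos hb0]
      push_cast; ring_nf
    rw [e1, e2]
    exact Real.exp_lt_exp.mpr hmain
  -- rewrite λ_c
  have hlc : (Δ + 1) ^ (Δ + 1) / Δ ^ (Δ + 2) = (1 + 1/Δ) ^ (Δ + 1) / Δ := by
    have h1 : (1 + 1/Δ) = (Δ + 1) / Δ := by field_simp
    rw [h1, Real.div_rpow (by linarith) (le_of_lt hΔ0)]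
    rw [show Δ + 2 = (Δ + 1) + 1 by ring, Real.rpow_add hΔ0, Real.rpow_one]
    field_simp
  -- contradiction
  have h4 : (1 + 1/s) ^ (d + 1) ≤ y ^ (d + 1) := by
    exact pow_le_pow_left₀ (le_of_lt hb0) hys (d + 1)
  have h5 : lam < y ^ (d + 1) / Δ := by
    calc lam < (1 + 1/Δ) ^ (Δ + 1) / Δ := by rw [← hlc]; exact hlt
      _ < (1 + 1/s) ^ (d + 1) / Δ := by gcongr
      _ ≤ y ^ (d + 1) / Δ := by gcongr
  have h6 : y ^ (d + 1) / Δ ≤ lam := by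
    rw [div_le_iff₀ hΔ0]; exact hlamΔ
  linarith
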